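/- Let (M̃,g̃) be a 7-dimensional spin manifold of signature (4,3) with a parallel spinor ψ with ⟨ψ,ψ⟩ ≠ 0 and a parallel line of null spinors spanned by φ. Then the vector field V defined by g̃(V,X) = ⟨X·ψ, φ⟩ spans a line bundle that is parallel with respect to the Levi-Civita connection, and V is nowhere zero. -/
import Mathlib


open Matrix

/-- The five explicit 4×4 real γ-matrices from the paper. -/
noncomputable def gammaMat : Fin 5 → Matrix (Fin 4) (Fin 4) ℝ
  | 0 => !![0,0,0,1; 0,0,1,0; 0,1,0,0; 1,0,0,0]
  | 1 => !![0,0,0,-1; 0,0,1,0; 0,-1,0,0; 1,0,0,0]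
  | 2 => !![0,0,1,0; 0,0,0,-1; 1,0,0,0; 0,-1,0,0]
  | 3 => !![0,0,-1,0; 0,0,0,-1; 1,0,0,0; 0,1,0,0]
  | 4 => !![1,0,0,0; 0,1,0,0; 0,0,-1,0; 0,0,0,-1]

/-- The seven 8×8 σ-matrices, built in 2×2 block form from the γ-matrices. -/
noncomputable def sigmaMat : Fin 7 → Matrix (Fin 4 ⊕ Fin 4) (Fin 4 ⊕ Fin 4) ℝ
  | 0 => fromBlocks 0 (gammaMat 0) (gammaMat 0) 0
  | 1 => fromBlocks 0 (gammaMat 2) (gammaMat 2) 0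
  | 2 => fromBlocks 0 (gammaMat 4) (gammaMat 4) 0
  | 3 => fromBlocks 1 0 0 (-1)
  | 4 => fromBlocks 0 (gammaMat 1) (gammaMat 1) 0
  | 5 => fromBlocks 0 (gammaMat 3) (gammaMat 3) 0
  | 6 => fromBlocks 0 (-1) 1 0

/-- The diagonal metric g̃ = diag(1,1,1,1,-1,-1,-1) of signature (4,3). -/
def gMetric : Fin 7 → Fin 7 → ℝ :=
  fun i j => if i = j then (if (i : ℕ) < 4 then 1 else -1) else 0

/-- The spinor module ℝ⁸. -/
abbrev Spinor := Fin 4 ⊕ Fin 4 → ℝ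

/-- The invariant bilinear form ⟨φ,ψ⟩ := -(σ₄σ₅σ₆ φ, ψ), where (.,.) is the
Euclidean standard inner product on ℝ⁸. -/
noncomputable def spinProd (φ ψ : Spinor) : ℝ :=
  -(((sigmaMat 4 * sigmaMat 5 * sigmaMat 6) *ᵥ φ) ⬝ᵥ ψ)

/-- Clifford multiplication of a vector X ∈ ℝ^{4,3} on a spinor: X·ψ = Σᵢ Xⁱ σᵢ ψ. -/
noncomputable def cliffordMul (X : Fin 7 → ℝ) (ψ : Spinor) : Spinor :=
  ∑ i, X i • (sigmaMat i *ᵥ ψ)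

/-- The metric g̃ of signature (4,3) as a bilinear pairing on ℝ⁷. -/
def gPair (X Y : Fin 7 → ℝ) : ℝ := ∑ i, ∑ j, gMetric i j * X i * Y j

lemma spinProd_eq (x y : Spinor) : spinProd x y =
    -(x (.inr 1) * y (.inl 0)) + x (.inr 0) * y (.inl 1) + x (.inr 3) * y (.inl 2)
      - x (.inr 2) * y (.inl 3) + x (.inl 1) * y (.inr 0) - x (.inl 0) * y (.inr 1)
      - x (.inl 3) * y (.inr 2) + x (.inl 2) * y (.inr 3) := by
  simp [spinProd, sigmaMat, gammaMat, Matrix.mulVec, Matrix.mul_apply, dotProduct,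
    Fintype.sum_sum_type, Fin.sum_univ_four, Matrix.fromBlocks, Matrix.vecHead,
    Matrix.vecTail, Function.comp]
  ring
lemma sig0_0 (x : Spinor) : (sigmaMat 0 *ᵥ x) (.inl 0) = x (.inr 3) := by simp [sigmaMat, gammaMat, Matrix.mulVec, dotProduct, Fintype.sum_sum_type, Fin.sum_univ_four, Matrix.fromBlocks, Matrix.vecHead, Matrix.vecTail]
lemma sig0_1 (x : Spinor) : (sigmaMat 0 *ᵥ x) (.inl 1) = x (.inr 2) := by simp [sigmaMat, gammaMat, Matrix.mulVec, dotProduct, Fintype.sum_sum_type, Fin.sum_univ_four, Matrix.fromBlocks, Matrix.vecHead, Matrix.vecTail]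
lemma sig0_2 (x : Spinor) : (sigmaMat 0 *ᵥ x) (.inl 2) = x (.inr 1) := by simp [sigmaMat, gammaMat, Matrix.mulVec, dotProduct, Fintype.sum_sum_type, Fin.sum_univ_four, Matrix.fromBlocks, Matrix.vecHead, Matrix.vecTail]
lemma sig0_3 (x : Spinor) : (sigmaMat 0 *ᵥ x) (.inl 3) = x (.inr 0) := by simp [sigmaMat, gammaMat, Matrix.mulVec, dotProduct, Fintype.sum_sum_type, Fin.sum_univ_four, Matrix.fromBlocks, Matrix.vecHead, Matrix.vecTail]
lemma sig0_4 (x : Spinor) : (sigmaMat 0 *ᵥ x) (.inr 0) = x (.inl 3) := by simp [sigmaMat, gammaMat, Matrix.mulVec, dotProduct, Fintype.sum_sum_type, Fin.sum_univ_four, Matrix.fromBlocks, Matrix.vecHead, Matrix.vecTail]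
lemma sig0_5 (x : Spinor) : (sigmaMat 0 *ᵥ x) (.inr 1) = x (.inl 2) := by simp [sigmaMat, gammaMat, Matrix.mulVec, dotProduct, Fintype.sum_sum_type, Fin.sum_univ_four, Matrix.fromBlocks, Matrix.vecHead, Matrix.vecTail]
lemma sig0_6 (x : Spinor) : (sigmaMat 0 *ᵥ x) (.inr 2) = x (.inl 1) := by simp [sigmaMat, gammaMat, Matrix.mulVec, dotProduct, Fintype.sum_sum_type, Fin.sum_univ_four, Matrix.fromBlocks, Matrix.vecHead, Matrix.vecTail]
lemma sig0_7 (x : Spinor) : (sigmaMat 0 *ᵥ x) (.inr 3) = x (.inl 0) := by simp [sigmaMat, gammaMat, Matrix.mulVec, dotProduct, Fintype.sum_sum_type, Fin.sum_univ_four, Matrix.fromBlocks, Matrix.vecHead, Matrix.vecTail]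
lemma sig1_0 (x : Spinor) : (sigmaMat 1 *ᵥ x) (.inl 0) = x (.inr 2) := by simp [sigmaMat, gammaMat, Matrix.mulVec, dotProduct, Fintype.sum_sum_type, Fin.sum_univ_four, Matrix.fromBlocks, Matrix.vecHead, Matrix.vecTail]
lemma sig1_1 (x : Spinor) : (sigmaMat 1 *ᵥ x) (.inl 1) = -x (.inr 3) := by simp [sigmaMat, gammaMat, Matrix.mulVec, dotProduct, Fintype.sum_sum_type, Fin.sum_univ_four, Matrix.fromBlocks, Matrix.vecHead, Matrix.vecTail]
lemma sig1_2 (x : Spinor) : (sigmaMat 1 *ᵥ x) (.inl 2) = x (.inr 0) := by simp [sigmaMat, gammaMat, Matrix.mulVec, dotProduct, Fintype.sum_sum_type, Fin.sum_univ_four, Matrix.fromBlocks, Matrix.vecHead, Matrix.vecTail]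
lemma sig1_3 (x : Spinor) : (sigmaMat 1 *ᵥ x) (.inl 3) = -x (.inr 1) := by simp [sigmaMat, gammaMat, Matrix.mulVec, dotProduct, Fintype.sum_sum_type, Fin.sum_univ_four, Matrix.fromBlocks, Matrix.vecHead, Matrix.vecTail]
lemma sig1_4 (x : Spinor) : (sigmaMat 1 *ᵥ x) (.inr 0) = x (.inl 2) := by simp [sigmaMat, gammaMat, Matrix.mulVec, dotProduct, Fintype.sum_sum_type, Fin.sum_univ_four, Matrix.fromBlocks, Matrix.vecHead, Matrix.vecTail]
lemma sig1_5 (x : Spinor) : (sigmaMat 1 *ᵥ x) (.inr 1) = -x (.inl 3) := by simp [sigmaMat, gammaMat, Matrix.mulVec, dotProduct, Fintype.sum_sum_type, Fin.sum_univ_four, Matrix.fromBlocks, Matrix.vecHead, Matrix.vecTail]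
lemma sig1_6 (x : Spinor) : (sigmaMat 1 *ᵥ x) (.inr 2) = x (.inl 0) := by simp [sigmaMat, gammaMat, Matrix.mulVec, dotProduct, Fintype.sum_sum_type, Fin.sum_univ_four, Matrix.fromBlocks, Matrix.vecHead, Matrix.vecTail]
lemma sig1_7 (x : Spinor) : (sigmaMat 1 *ᵥ x) (.inr 3) = -x (.inl 1) := by simp [sigmaMat, gammaMat, Matrix.mulVec, dotProduct, Fintype.sum_sum_type, Fin.sum_univ_four, Matrix.fromBlocks, Matrix.vecHead, Matrix.vecTail]
lemma sig2_0 (x : Spinor) : (sigmaMat 2 *ᵥ x) (.inl 0) = x (.inr 0) := by simp [sigmaMat, gammaMat, Matrix.mulVec, dotProduct, Fintype.sum_sum_type, Fin.sum_univ_four, Matrix.fromBlocks, Matrix.vecHead, Matrix.vecTail]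
lemma sig2_1 (x : Spinor) : (sigmaMat 2 *ᵥ x) (.inl 1) = x (.inr 1) := by simp [sigmaMat, gammaMat, Matrix.mulVec, dotProduct, Fintype.sum_sum_type, Fin.sum_univ_four, Matrix.fromBlocks, Matrix.vecHead, Matrix.vecTail]
lemma sig2_2 (x : Spinor) : (sigmaMat 2 *ᵥ x) (.inl 2) = -x (.inr 2) := by simp [sigmaMat, gammaMat, Matrix.mulVec, dotProduct, Fintype.sum_sum_type, Fin.sum_univ_four, Matrix.fromBlocks, Matrix.vecHead, Matrix.vecTail]
lemma sig2_3 (x : Spinor) : (sigmaMat 2 *ᵥ x) (.inl 3) = -x (.inr 3) := by simp [sigmaMat, gammaMat, Matrix.mulVec, dotProduct, Fintype.sum_sum_type, Fin.sum_univ_four, Matrix.fromBlocks, Matrix.vecHead, Matrix.vecTail]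
lemma sig2_4 (x : Spinor) : (sigmaMat 2 *ᵥ x) (.inr 0) = x (.inl 0) := by simp [sigmaMat, gammaMat, Matrix.mulVec, dotProduct, Fintype.sum_sum_type, Fin.sum_univ_four, Matrix.fromBlocks, Matrix.vecHead, Matrix.vecTail]
lemma sig2_5 (x : Spinor) : (sigmaMat 2 *ᵥ x) (.inr 1) = x (.inl 1) := by simp [sigmaMat, gammaMat, Matrix.mulVec, dotProduct, Fintype.sum_sum_type, Fin.sum_univ_four, Matrix.fromBlocks, Matrix.vecHead, Matrix.vecTail]
lemma sig2_6 (x : Spinor) : (sigmaMat 2 *ᵥ x) (.inr 2) = -x (.inl 2) := by simp [sigmaMat, gammaMat, Matrix.mulVec, dotProduct, Fintype.sum_sum_type, Fin.sum_univ_four, Matrix.fromBlocks, Matrix.vecHead, Matrix.vecTail]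
lemma sig2_7 (x : Spinor) : (sigmaMat 2 *ᵥ x) (.inr 3) = -x (.inl 3) := by simp [sigmaMat, gammaMat, Matrix.mulVec, dotProduct, Fintype.sum_sum_type, Fin.sum_univ_four, Matrix.fromBlocks, Matrix.vecHead, Matrix.vecTail]
lemma sig3_0 (x : Spinor) : (sigmaMat 3 *ᵥ x) (.inl 0) = x (.inl 0) := by simp [sigmaMat, gammaMat, Matrix.mulVec, dotProduct, Fintype.sum_sum_type, Fin.sum_univ_four, Matrix.fromBlocks, Matrix.vecHead, Matrix.vecTail]
lemma sig3_1 (x : Spinor) : (sigmaMat 3 *ᵥ x) (.inl 1) = x (.inl 1) := by simp [sigmaMat, gammaMat, Matrix.mulVec, dotProduct, Fintype.sum_sum_type, Fin.sum_univ_four, Matrix.fromBlocks, Matrix.vecHead, Matrix.vecTail]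
lemma sig3_2 (x : Spinor) : (sigmaMat 3 *ᵥ x) (.inl 2) = x (.inl 2) := by simp [sigmaMat, gammaMat, Matrix.mulVec, dotProduct, Fintype.sum_sum_type, Fin.sum_univ_four, Matrix.fromBlocks, Matrix.vecHead, Matrix.vecTail]
lemma sig3_3 (x : Spinor) : (sigmaMat 3 *ᵥ x) (.inl 3) = x (.inl 3) := by simp [sigmaMat, gammaMat, Matrix.mulVec, dotProduct, Fintype.sum_sum_type, Fin.sum_univ_four, Matrix.fromBlocks, Matrix.vecHead, Matrix.vecTail]
lemma sig3_4 (x : Spinor) : (sigmaMat 3 *ᵥ x) (.inr 0) = -x (.inr 0) := by simp [sigmaMat, gammaMat, Matrix.mulVec, dotProduct, Fintype.sum_sum_type, Fin.sum_univ_four, Matrix.fromBlocks, Matrix.vecHead, Matrix.vecTail]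
lemma sig3_5 (x : Spinor) : (sigmaMat 3 *ᵥ x) (.inr 1) = -x (.inr 1) := by simp [sigmaMat, gammaMat, Matrix.mulVec, dotProduct, Fintype.sum_sum_type, Fin.sum_univ_four, Matrix.fromBlocks, Matrix.vecHead, Matrix.vecTail]
lemma sig3_6 (x : Spinor) : (sigmaMat 3 *ᵥ x) (.inr 2) = -x (.inr 2) := by simp [sigmaMat, gammaMat, Matrix.mulVec, dotProduct, Fintype.sum_sum_type, Fin.sum_univ_four, Matrix.fromBlocks, Matrix.vecHead, Matrix.vecTail]
lemma sig3_7 (x : Spinor) : (sigmaMat 3 *ᵥ x) (.inr 3) = -x (.inr 3) := by simp [sigmaMat, gammaMat, Matrix.mulVec, dotProduct, Fintype.sum_sum_type, Fin.sum_univ_four, Matrix.fromBlocks, Matrix.vecHead, Matrix.vecTail]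
lemma sig4_0 (x : Spinor) : (sigmaMat 4 *ᵥ x) (.inl 0) = -x (.inr 3) := by simp [sigmaMat, gammaMat, Matrix.mulVec, dotProduct, Fintype.sum_sum_type, Fin.sum_univ_four, Matrix.fromBlocks, Matrix.vecHead, Matrix.vecTail]
lemma sig4_1 (x : Spinor) : (sigmaMat 4 *ᵥ x) (.inl 1) = x (.inr 2) := by simp [sigmaMat, gammaMat, Matrix.mulVec, dotProduct, Fintype.sum_sum_type, Fin.sum_univ_four, Matrix.fromBlocks, Matrix.vecHead, Matrix.vecTail]
lemma sig4_2 (x : Spinor) : (sigmaMat 4 *ᵥ x) (.inl 2) = -x (.inr 1) := by simp [sigmaMat, gammaMat, Matrix.mulVec, dotProduct, Fintype.sum_sum_type, Fin.sum_univ_four, Matrix.fromBlocks, Matrix.vecHead, Matrix.vecTail]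
lemma sig4_3 (x : Spinor) : (sigmaMat 4 *ᵥ x) (.inl 3) = x (.inr 0) := by simp [sigmaMat, gammaMat, Matrix.mulVec, dotProduct, Fintype.sum_sum_type, Fin.sum_univ_four, Matrix.fromBlocks, Matrix.vecHead, Matrix.vecTail]
lemma sig4_4 (x : Spinor) : (sigmaMat 4 *ᵥ x) (.inr 0) = -x (.inl 3) := by simp [sigmaMat, gammaMat, Matrix.mulVec, dotProduct, Fintype.sum_sum_type, Fin.sum_univ_four, Matrix.fromBlocks, Matrix.vecHead, Matrix.vecTail]
lemma sig4_5 (x : Spinor) : (sigmaMat 4 *ᵥ x) (.inr 1) = x (.inl 2) := by simp [sigmaMat, gammaMat, Matrix.mulVec, dotProduct, Fintype.sum_sum_type, Fin.sum_univ_four, Matrix.fromBlocks, Matrix.vecHead, Matrix.vecTail]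
lemma sig4_6 (x : Spinor) : (sigmaMat 4 *ᵥ x) (.inr 2) = -x (.inl 1) := by simp [sigmaMat, gammaMat, Matrix.mulVec, dotProduct, Fintype.sum_sum_type, Fin.sum_univ_four, Matrix.fromBlocks, Matrix.vecHead, Matrix.vecTail]
lemma sig4_7 (x : Spinor) : (sigmaMat 4 *ᵥ x) (.inr 3) = x (.inl 0) := by simp [sigmaMat, gammaMat, Matrix.mulVec, dotProduct, Fintype.sum_sum_type, Fin.sum_univ_four, Matrix.fromBlocks, Matrix.vecHead, Matrix.vecTail]
lemma sig5_0 (x : Spinor) : (sigmaMat 5 *ᵥ x) (.inl 0) = -x (.inr 2) := by simp [sigmaMat, gammaMat, Matrix.mulVec, dotProduct, Fintype.sum_sum_type, Fin.sum_univ_four, Matrix.fromBlocks, Matrix.vecHead, Matrix.vecTail]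
lemma sig5_1 (x : Spinor) : (sigmaMat 5 *ᵥ x) (.inl 1) = -x (.inr 3) := by simp [sigmaMat, gammaMat, Matrix.mulVec, dotProduct, Fintype.sum_sum_type, Fin.sum_univ_four, Matrix.fromBlocks, Matrix.vecHead, Matrix.vecTail]
lemma sig5_2 (x : Spinor) : (sigmaMat 5 *ᵥ x) (.inl 2) = x (.inr 0) := by simp [sigmaMat, gammaMat, Matrix.mulVec, dotProduct, Fintype.sum_sum_type, Fin.sum_univ_four, Matrix.fromBlocks, Matrix.vecHead, Matrix.vecTail]
lemma sig5_3 (x : Spinor) : (sigmaMat 5 *ᵥ x) (.inl 3) = x (.inr 1) := by simp [sigmaMat, gammaMat, Matrix.mulVec, dotProduct, Fintype.sum_sum_type, Fin.sum_univ_four, Matrix.fromBlocks, Matrix.vecHead, Matrix.vecTail]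
lemma sig5_4 (x : Spinor) : (sigmaMat 5 *ᵥ x) (.inr 0) = -x (.inl 2) := by simp [sigmaMat, gammaMat, Matrix.mulVec, dotProduct, Fintype.sum_sum_type, Fin.sum_univ_four, Matrix.fromBlocks, Matrix.vecHead, Matrix.vecTail]
lemma sig5_5 (x : Spinor) : (sigmaMat 5 *ᵥ x) (.inr 1) = -x (.inl 3) := by simp [sigmaMat, gammaMat, Matrix.mulVec, dotProduct, Fintype.sum_sum_type, Fin.sum_univ_four, Matrix.fromBlocks, Matrix.vecHead, Matrix.vecTail]
lemma sig5_6 (x : Spinor) : (sigmaMat 5 *ᵥ x) (.inr 2) = x (.inl 0) := by simp [sigmaMat, gammaMat, Matrix.mulVec, dotProduct, Fintype.sum_sum_type, Fin.sum_univ_four, Matrix.fromBlocks, Matrix.vecHead, Matrix.vecTail]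
lemma sig5_7 (x : Spinor) : (sigmaMat 5 *ᵥ x) (.inr 3) = x (.inl 1) := by simp [sigmaMat, gammaMat, Matrix.mulVec, dotProduct, Fintype.sum_sum_type, Fin.sum_univ_four, Matrix.fromBlocks, Matrix.vecHead, Matrix.vecTail]
lemma sig6_0 (x : Spinor) : (sigmaMat 6 *ᵥ x) (.inl 0) = -x (.inr 0) := by simp [sigmaMat, gammaMat, Matrix.mulVec, dotProduct, Fintype.sum_sum_type, Fin.sum_univ_four, Matrix.fromBlocks, Matrix.vecHead, Matrix.vecTail]
lemma sig6_1 (x : Spinor) : (sigmaMat 6 *ᵥ x) (.inl 1) = -x (.inr 1) := by simp [sigmaMat, gammaMat, Matrix.mulVec, dotProduct, Fintype.sum_sum_type, Fin.sum_univ_four, Matrix.fromBlocks, Matrix.vecHead, Matrix.vecTail]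
lemma sig6_2 (x : Spinor) : (sigmaMat 6 *ᵥ x) (.inl 2) = -x (.inr 2) := by simp [sigmaMat, gammaMat, Matrix.mulVec, dotProduct, Fintype.sum_sum_type, Fin.sum_univ_four, Matrix.fromBlocks, Matrix.vecHead, Matrix.vecTail]
lemma sig6_3 (x : Spinor) : (sigmaMat 6 *ᵥ x) (.inl 3) = -x (.inr 3) := by simp [sigmaMat, gammaMat, Matrix.mulVec, dotProduct, Fintype.sum_sum_type, Fin.sum_univ_four, Matrix.fromBlocks, Matrix.vecHead, Matrix.vecTail]
lemma sig6_4 (x : Spinor) : (sigmaMat 6 *ᵥ x) (.inr 0) = x (.inl 0) := by simp [sigmaMat, gammaMat, Matrix.mulVec, dotProduct, Fintype.sum_sum_type, Fin.sum_univ_four, Matrix.fromBlocks, Matrix.vecHead, Matrix.vecTail]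
lemma sig6_5 (x : Spinor) : (sigmaMat 6 *ᵥ x) (.inr 1) = x (.inl 1) := by simp [sigmaMat, gammaMat, Matrix.mulVec, dotProduct, Fintype.sum_sum_type, Fin.sum_univ_four, Matrix.fromBlocks, Matrix.vecHead, Matrix.vecTail]
lemma sig6_6 (x : Spinor) : (sigmaMat 6 *ᵥ x) (.inr 2) = x (.inl 2) := by simp [sigmaMat, gammaMat, Matrix.mulVec, dotProduct, Fintype.sum_sum_type, Fin.sum_univ_four, Matrix.fromBlocks, Matrix.vecHead, Matrix.vecTail]
lemma sig6_7 (x : Spinor) : (sigmaMat 6 *ᵥ x) (.inr 3) = x (.inl 3) := by simp [sigmaMat, gammaMat, Matrix.mulVec, dotProduct, Fintype.sum_sum_type, Fin.sum_univ_four, Matrix.fromBlocks, Matrix.vecHead, Matrix.vecTail]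


lemma key0 (ψ φ : Spinor) :
    spinProd ψ ψ * φ (.inl 0) = spinProd ψ φ * ψ (.inl 0)
      - spinProd (sigmaMat 0 *ᵥ ψ) φ * (sigmaMat 0 *ᵥ ψ) (.inl 0)
      - spinProd (sigmaMat 1 *ᵥ ψ) φ * (sigmaMat 1 *ᵥ ψ) (.inl 0)
      - spinProd (sigmaMat 2 *ᵥ ψ) φ * (sigmaMat 2 *ᵥ ψ) (.inl 0)
      - spinProd (sigmaMat 3 *ᵥ ψ) φ * (sigmaMat 3 *ᵥ ψ) (.inl 0)
      + spinProd (sigmaMat 4 *ᵥ ψ) φ * (sigmaMat 4 *ᵥ ψ) (.inl 0)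
      + spinProd (sigmaMat 5 *ᵥ ψ) φ * (sigmaMat 5 *ᵥ ψ) (.inl 0)
      + spinProd (sigmaMat 6 *ᵥ ψ) φ * (sigmaMat 6 *ᵥ ψ) (.inl 0) := by
  simp only [spinProd_eq, sig0_0, sig0_1, sig0_2, sig0_3, sig0_4, sig0_5, sig0_6, sig0_7, sig1_0, sig1_1, sig1_2, sig1_3, sig1_4, sig1_5, sig1_6, sig1_7, sig2_0, sig2_1, sig2_2, sig2_3, sig2_4, sig2_5, sig2_6, sig2_7, sig3_0, sig3_1, sig3_2, sig3_3, sig3_4, sig3_5, sig3_6, sig3_7, sig4_0, sig4_1, sig4_2, sig4_3, sig4_4, sig4_5, sig4_6, sig4_7, sig5_0, sig5_1, sig5_2, sig5_3, sig5_4, sig5_5, sig5_6, sig5_7, sig6_0, sig6_1, sig6_2, sig6_3, sig6_4, sig6_5, sig6_6, sig6_7]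
  ring

lemma key1 (ψ φ : Spinor) :
    spinProd ψ ψ * φ (.inl 1) = spinProd ψ φ * ψ (.inl 1)
      - spinProd (sigmaMat 0 *ᵥ ψ) φ * (sigmaMat 0 *ᵥ ψ) (.inl 1)
      - spinProd (sigmaMat 1 *ᵥ ψ) φ * (sigmaMat 1 *ᵥ ψ) (.inl 1)
      - spinProd (sigmaMat 2 *ᵥ ψ) φ * (sigmaMat 2 *ᵥ ψ) (.inl 1)
      - spinProd (sigmaMat 3 *ᵥ ψ) φ * (sigmaMat 3 *ᵥ ψ) (.inl 1)
      + spinProd (sigmaMat 4 *ᵥ ψ) φ * (sigmaMat 4 *ᵥ ψ) (.inl 1)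
      + spinProd (sigmaMat 5 *ᵥ ψ) φ * (sigmaMat 5 *ᵥ ψ) (.inl 1)
      + spinProd (sigmaMat 6 *ᵥ ψ) φ * (sigmaMat 6 *ᵥ ψ) (.inl 1) := by
  simp only [spinProd_eq, sig0_0, sig0_1, sig0_2, sig0_3, sig0_4, sig0_5, sig0_6, sig0_7, sig1_0, sig1_1, sig1_2, sig1_3, sig1_4, sig1_5, sig1_6, sig1_7, sig2_0, sig2_1, sig2_2, sig2_3, sig2_4, sig2_5, sig2_6, sig2_7, sig3_0, sig3_1, sig3_2, sig3_3, sig3_4, sig3_5, sig3_6, sig3_7, sig4_0, sig4_1, sig4_2, sig4_3, sig4_4, sig4_5, sig4_6, sig4_7, sig5_0, sig5_1, sig5_2, sig5_3, sig5_4, sig5_5, sig5_6, sig5_7, sig6_0, sig6_1, sig6_2, sig6_3, sig6_4, sig6_5, sig6_6, sig6_7]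
  ring

lemma key2 (ψ φ : Spinor) :
    spinProd ψ ψ * φ (.inl 2) = spinProd ψ φ * ψ (.inl 2)
      - spinProd (sigmaMat 0 *ᵥ ψ) φ * (sigmaMat 0 *ᵥ ψ) (.inl 2)
      - spinProd (sigmaMat 1 *ᵥ ψ) φ * (sigmaMat 1 *ᵥ ψ) (.inl 2)
      - spinProd (sigmaMat 2 *ᵥ ψ) φ * (sigmaMat 2 *ᵥ ψ) (.inl 2)
      - spinProd (sigmaMat 3 *ᵥ ψ) φ * (sigmaMat 3 *ᵥ ψ) (.inl 2)
      + spinProd (sigmaMat 4 *ᵥ ψ) φ * (sigmaMat 4 *ᵥ ψ) (.inl 2)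
      + spinProd (sigmaMat 5 *ᵥ ψ) φ * (sigmaMat 5 *ᵥ ψ) (.inl 2)
      + spinProd (sigmaMat 6 *ᵥ ψ) φ * (sigmaMat 6 *ᵥ ψ) (.inl 2) := by
  simp only [spinProd_eq, sig0_0, sig0_1, sig0_2, sig0_3, sig0_4, sig0_5, sig0_6, sig0_7, sig1_0, sig1_1, sig1_2, sig1_3, sig1_4, sig1_5, sig1_6, sig1_7, sig2_0, sig2_1, sig2_2, sig2_3, sig2_4, sig2_5, sig2_6, sig2_7, sig3_0, sig3_1, sig3_2, sig3_3, sig3_4, sig3_5, sig3_6, sig3_7, sig4_0, sig4_1, sig4_2, sig4_3, sig4_4, sig4_5, sig4_6, sig4_7, sig5_0, sig5_1, sig5_2, sig5_3, sig5_4, sig5_5, sig5_6, sig5_7, sig6_0, sig6_1, sig6_2, sig6_3, sig6_4, sig6_5, sig6_6, sig6_7]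
  ring

lemma key3 (ψ φ : Spinor) :
    spinProd ψ ψ * φ (.inl 3) = spinProd ψ φ * ψ (.inl 3)
      - spinProd (sigmaMat 0 *ᵥ ψ) φ * (sigmaMat 0 *ᵥ ψ) (.inl 3)
      - spinProd (sigmaMat 1 *ᵥ ψ) φ * (sigmaMat 1 *ᵥ ψ) (.inl 3)
      - spinProd (sigmaMat 2 *ᵥ ψ) φ * (sigmaMat 2 *ᵥ ψ) (.inl 3)
      - spinProd (sigmaMat 3 *ᵥ ψ) φ * (sigmaMat 3 *ᵥ ψ) (.inl 3)
      + spinProd (sigmaMat 4 *ᵥ ψ) φ * (sigmaMat 4 *ᵥ ψ) (.inl 3)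
      + spinProd (sigmaMat 5 *ᵥ ψ) φ * (sigmaMat 5 *ᵥ ψ) (.inl 3)
      + spinProd (sigmaMat 6 *ᵥ ψ) φ * (sigmaMat 6 *ᵥ ψ) (.inl 3) := by
  simp only [spinProd_eq, sig0_0, sig0_1, sig0_2, sig0_3, sig0_4, sig0_5, sig0_6, sig0_7, sig1_0, sig1_1, sig1_2, sig1_3, sig1_4, sig1_5, sig1_6, sig1_7, sig2_0, sig2_1, sig2_2, sig2_3, sig2_4, sig2_5, sig2_6, sig2_7, sig3_0, sig3_1, sig3_2, sig3_3, sig3_4, sig3_5, sig3_6, sig3_7, sig4_0, sig4_1, sig4_2, sig4_3, sig4_4, sig4_5, sig4_6, sig4_7, sig5_0, sig5_1, sig5_2, sig5_3, sig5_4, sig5_5, sig5_6, sig5_7, sig6_0, sig6_1, sig6_2, sig6_3, sig6_4, sig6_5, sig6_6, sig6_7]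
  ring

lemma key4 (ψ φ : Spinor) :
    spinProd ψ ψ * φ (.inr 0) = spinProd ψ φ * ψ (.inr 0)
      - spinProd (sigmaMat 0 *ᵥ ψ) φ * (sigmaMat 0 *ᵥ ψ) (.inr 0)
      - spinProd (sigmaMat 1 *ᵥ ψ) φ * (sigmaMat 1 *ᵥ ψ) (.inr 0)
      - spinProd (sigmaMat 2 *ᵥ ψ) φ * (sigmaMat 2 *ᵥ ψ) (.inr 0)
      - spinProd (sigmaMat 3 *ᵥ ψ) φ * (sigmaMat 3 *ᵥ ψ) (.inr 0)
      + spinProd (sigmaMat 4 *ᵥ ψ) φ * (sigmaMat 4 *ᵥ ψ) (.inr 0)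
      + spinProd (sigmaMat 5 *ᵥ ψ) φ * (sigmaMat 5 *ᵥ ψ) (.inr 0)
      + spinProd (sigmaMat 6 *ᵥ ψ) φ * (sigmaMat 6 *ᵥ ψ) (.inr 0) := by
  simp only [spinProd_eq, sig0_0, sig0_1, sig0_2, sig0_3, sig0_4, sig0_5, sig0_6, sig0_7, sig1_0, sig1_1, sig1_2, sig1_3, sig1_4, sig1_5, sig1_6, sig1_7, sig2_0, sig2_1, sig2_2, sig2_3, sig2_4, sig2_5, sig2_6, sig2_7, sig3_0, sig3_1, sig3_2, sig3_3, sig3_4, sig3_5, sig3_6, sig3_7, sig4_0, sig4_1, sig4_2, sig4_3, sig4_4, sig4_5, sig4_6, sig4_7, sig5_0, sig5_1, sig5_2, sig5_3, sig5_4, sig5_5, sig5_6, sig5_7, sig6_0, sig6_1, sig6_2, sig6_3, sig6_4, sig6_5, sig6_6, sig6_7]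
  ring

lemma key5 (ψ φ : Spinor) :
    spinProd ψ ψ * φ (.inr 1) = spinProd ψ φ * ψ (.inr 1)
      - spinProd (sigmaMat 0 *ᵥ ψ) φ * (sigmaMat 0 *ᵥ ψ) (.inr 1)
      - spinProd (sigmaMat 1 *ᵥ ψ) φ * (sigmaMat 1 *ᵥ ψ) (.inr 1)
      - spinProd (sigmaMat 2 *ᵥ ψ) φ * (sigmaMat 2 *ᵥ ψ) (.inr 1)
      - spinProd (sigmaMat 3 *ᵥ ψ) φ * (sigmaMat 3 *ᵥ ψ) (.inr 1)
      + spinProd (sigmaMat 4 *ᵥ ψ) φ * (sigmaMat 4 *ᵥ ψ) (.inr 1)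
      + spinProd (sigmaMat 5 *ᵥ ψ) φ * (sigmaMat 5 *ᵥ ψ) (.inr 1)
      + spinProd (sigmaMat 6 *ᵥ ψ) φ * (sigmaMat 6 *ᵥ ψ) (.inr 1) := by
  simp only [spinProd_eq, sig0_0, sig0_1, sig0_2, sig0_3, sig0_4, sig0_5, sig0_6, sig0_7, sig1_0, sig1_1, sig1_2, sig1_3, sig1_4, sig1_5, sig1_6, sig1_7, sig2_0, sig2_1, sig2_2, sig2_3, sig2_4, sig2_5, sig2_6, sig2_7, sig3_0, sig3_1, sig3_2, sig3_3, sig3_4, sig3_5, sig3_6, sig3_7, sig4_0, sig4_1, sig4_2, sig4_3, sig4_4, sig4_5, sig4_6, sig4_7, sig5_0, sig5_1, sig5_2, sig5_3, sig5_4, sig5_5, sig5_6, sig5_7, sig6_0, sig6_1, sig6_2, sig6_3, sig6_4, sig6_5, sig6_6, sig6_7]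
  ring

lemma key6 (ψ φ : Spinor) :
    spinProd ψ ψ * φ (.inr 2) = spinProd ψ φ * ψ (.inr 2)
      - spinProd (sigmaMat 0 *ᵥ ψ) φ * (sigmaMat 0 *ᵥ ψ) (.inr 2)
      - spinProd (sigmaMat 1 *ᵥ ψ) φ * (sigmaMat 1 *ᵥ ψ) (.inr 2)
      - spinProd (sigmaMat 2 *ᵥ ψ) φ * (sigmaMat 2 *ᵥ ψ) (.inr 2)
      - spinProd (sigmaMat 3 *ᵥ ψ) φ * (sigmaMat 3 *ᵥ ψ) (.inr 2)
      + spinProd (sigmaMat 4 *ᵥ ψ) φ * (sigmaMat 4 *ᵥ ψ) (.inr 2)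
      + spinProd (sigmaMat 5 *ᵥ ψ) φ * (sigmaMat 5 *ᵥ ψ) (.inr 2)
      + spinProd (sigmaMat 6 *ᵥ ψ) φ * (sigmaMat 6 *ᵥ ψ) (.inr 2) := by
  simp only [spinProd_eq, sig0_0, sig0_1, sig0_2, sig0_3, sig0_4, sig0_5, sig0_6, sig0_7, sig1_0, sig1_1, sig1_2, sig1_3, sig1_4, sig1_5, sig1_6, sig1_7, sig2_0, sig2_1, sig2_2, sig2_3, sig2_4, sig2_5, sig2_6, sig2_7, sig3_0, sig3_1, sig3_2, sig3_3, sig3_4, sig3_5, sig3_6, sig3_7, sig4_0, sig4_1, sig4_2, sig4_3, sig4_4, sig4_5, sig4_6, sig4_7, sig5_0, sig5_1, sig5_2, sig5_3, sig5_4, sig5_5, sig5_6, sig5_7, sig6_0, sig6_1, sig6_2, sig6_3, sig6_4, sig6_5, sig6_6, sig6_7]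
  ring

lemma key7 (ψ φ : Spinor) :
    spinProd ψ ψ * φ (.inr 3) = spinProd ψ φ * ψ (.inr 3)
      - spinProd (sigmaMat 0 *ᵥ ψ) φ * (sigmaMat 0 *ᵥ ψ) (.inr 3)
      - spinProd (sigmaMat 1 *ᵥ ψ) φ * (sigmaMat 1 *ᵥ ψ) (.inr 3)
      - spinProd (sigmaMat 2 *ᵥ ψ) φ * (sigmaMat 2 *ᵥ ψ) (.inr 3)
      - spinProd (sigmaMat 3 *ᵥ ψ) φ * (sigmaMat 3 *ᵥ ψ) (.inr 3)
      + spinProd (sigmaMat 4 *ᵥ ψ) φ * (sigmaMat 4 *ᵥ ψ) (.inr 3)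
      + spinProd (sigmaMat 5 *ᵥ ψ) φ * (sigmaMat 5 *ᵥ ψ) (.inr 3)
      + spinProd (sigmaMat 6 *ᵥ ψ) φ * (sigmaMat 6 *ᵥ ψ) (.inr 3) := by
  simp only [spinProd_eq, sig0_0, sig0_1, sig0_2, sig0_3, sig0_4, sig0_5, sig0_6, sig0_7, sig1_0, sig1_1, sig1_2, sig1_3, sig1_4, sig1_5, sig1_6, sig1_7, sig2_0, sig2_1, sig2_2, sig2_3, sig2_4, sig2_5, sig2_6, sig2_7, sig3_0, sig3_1, sig3_2, sig3_3, sig3_4, sig3_5, sig3_6, sig3_7, sig4_0, sig4_1, sig4_2, sig4_3, sig4_4, sig4_5, sig4_6, sig4_7, sig5_0, sig5_1, sig5_2, sig5_3, sig5_4, sig5_5, sig5_6, sig5_7, sig6_0, sig6_1, sig6_2, sig6_3, sig6_4, sig6_5, sig6_6, sig6_7]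
  ring


lemma key (ψ φ : Spinor) :
    spinProd ψ ψ • φ = spinProd ψ φ • ψ
      - spinProd (sigmaMat 0 *ᵥ ψ) φ • (sigmaMat 0 *ᵥ ψ)
      - spinProd (sigmaMat 1 *ᵥ ψ) φ • (sigmaMat 1 *ᵥ ψ)
      - spinProd (sigmaMat 2 *ᵥ ψ) φ • (sigmaMat 2 *ᵥ ψ)
      - spinProd (sigmaMat 3 *ᵥ ψ) φ • (sigmaMat 3 *ᵥ ψ)
      + spinProd (sigmaMat 4 *ᵥ ψ) φ • (sigmaMat 4 *ᵥ ψ)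
      + spinProd (sigmaMat 5 *ᵥ ψ) φ • (sigmaMat 5 *ᵥ ψ)
      + spinProd (sigmaMat 6 *ᵥ ψ) φ • (sigmaMat 6 *ᵥ ψ) := by
  funext r
  rcases r with r | r <;> fin_cases r
  · exact key0 ψ φ
  · exact key1 ψ φ
  · exact key2 ψ φ
  · exact key3 ψ φ
  · exact key4 ψ φ
  · exact key5 ψ φ
  · exact key6 ψ φ
  · exact key7 ψ φ

lemma spinProd_smul_right (c : ℝ) (a b : Spinor) : spinProd a (c • b) = c * spinProd a b := by
  simp [spinProd, dotProduct_smul, mul_comm]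

lemma spinProd_smul_left (c : ℝ) (a b : Spinor) : spinProd (c • a) b = c * spinProd a b := by
  simp [spinProd, Matrix.mulVec_smul, smul_dotProduct, mul_comm]

lemma spinProd_zero_right (a : Spinor) : spinProd a 0 = 0 := by
  simp [spinProd]

lemma pointwise (ψ φ : Spinor) (hs : spinProd ψ ψ ≠ 0)
    (hnull : spinProd φ φ = 0)
    (h : ∀ i : Fin 7, spinProd (sigmaMat i *ᵥ ψ) φ = 0) : φ = 0 := by
  have hk := key ψ φ
  rw [h 0, h 1, h 2, h 3, h 4, h 5, h 6] at hk
  simp only [zero_smul, sub_zero, add_zero] at hk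
  have h2 : spinProd ψ ψ * (spinProd ψ ψ * spinProd φ φ)
      = spinProd ψ φ * (spinProd ψ φ * spinProd ψ ψ) := by
    calc spinProd ψ ψ * (spinProd ψ ψ * spinProd φ φ)
        = spinProd (spinProd ψ ψ • φ) (spinProd ψ ψ • φ) := by
          rw [spinProd_smul_left, spinProd_smul_right]
      _ = spinProd (spinProd ψ φ • ψ) (spinProd ψ φ • ψ) := by rw [hk]
      _ = spinProd ψ φ * (spinProd ψ φ * spinProd ψ ψ) := by
          rw [spinProd_smul_left, spinProd_smul_right]
  rw [hnull] at h2
  have ht : spinProd ψ φ = 0 := by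
    have h3 : spinProd ψ φ * spinProd ψ φ = 0 := by
      rcases mul_eq_zero.mp (by linarith [h2] : spinProd ψ φ * (spinProd ψ φ * spinProd ψ ψ) = 0) with h | h
      · rw [h]; ring
      · rcases mul_eq_zero.mp h with h' | h'
        · rw [h']; ring
        · exact absurd h' hs
    exact mul_self_eq_zero.mp h3
  rw [ht, zero_smul] at hk
  rcases smul_eq_zero.mp hk with h | h
  · exact absurd h hs
  · exact h

lemma gPair_single (u : Fin 7 → ℝ) (j : Fin 7) :
    gPair u (Pi.single j 1) = gMetric j j * u j := by
  unfold gPair gMetric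
  simp [Pi.single_apply, mul_ite, ite_mul, Finset.sum_ite_eq, Finset.sum_ite_eq', mul_comm]

lemma gPair_ext {u v : Fin 7 → ℝ} (h : ∀ Y, gPair u Y = gPair v Y) : u = v := by
  funext j
  have hj := h (Pi.single j 1)
  rw [gPair_single, gPair_single] at hj
  have hd : gMetric j j ≠ 0 := by
    by_cases hc : (j : ℕ) < 4 <;> simp [gMetric, hc]
  exact mul_left_cancel₀ hd hj

lemma gPair_smul_left (c : ℝ) (u Y : Fin 7 → ℝ) : gPair (c • u) Y = c * gPair u Y := by
  unfold gPair
  rw [Finset.mul_sum]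
  refine Finset.sum_congr rfl fun i _ => ?_
  rw [Finset.mul_sum]
  refine Finset.sum_congr rfl fun j _ => ?_
  simp [mul_comm, mul_assoc, mul_left_comm]

lemma gPair_zero_left (Y : Fin 7 → ℝ) : gPair 0 Y = 0 := by
  simp [gPair]

lemma cliffordMul_zero (X : Fin 7 → ℝ) : cliffordMul X (0 : Spinor) = 0 := by
  simp [cliffordMul]

lemma cliffordMul_single (i : Fin 7) (x : Spinor) :
    cliffordMul (Pi.single i 1) x = sigmaMat i *ᵥ x := by
  unfold cliffordMul
  rw [Finset.sum_eq_single i]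
  · simp
  · intro b _ hb
    simp [Pi.single_apply, hb]
  · simp
/-- Let M̃ be a 7-dimensional spin manifold of signature (4,3),
presented in an orthonormal trivialisation: vector fields are maps M → ℝ⁷, spinor
fields are maps M → Δ₄,₃ = ℝ⁸, with a covariant derivative `Dv` on vector fields
and `Ds` on spinor fields and a directional derivative `Df` on functions, which
are metric, compatible with the spinor inner product ⟨·,·⟩ and with Clifford
multiplication.  Suppose ψ is a parallel spinor with ⟨ψ,ψ⟩ ≠ 0, and φ spans a
parallel line of null spinors, ∇̃φ = f ⊗ φ, ⟨φ,φ⟩ = 0, φ ≠ 0.  Then the vector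
field V defined by g̃(V,X) = ⟨X·ψ, φ⟩ satisfies ∇̃V = f ⊗ V (so it spans a
parallel line bundle) and V is nowhere zero. -/
theorem parallel_line_from_parallel_spinors {M : Type*}
    (Dv : (M → (Fin 7 → ℝ)) → (M → (Fin 7 → ℝ)) → (M → (Fin 7 → ℝ)))
    (Ds : (M → (Fin 7 → ℝ)) → (M → Spinor) → (M → Spinor))
    (Df : (M → (Fin 7 → ℝ)) → (M → ℝ) → (M → ℝ))
    -- the connection is metric:
    (hmet : ∀ X Y Z m, Df X (fun m' => gPair (Y m') (Z m')) m
      = gPair (Dv X Y m) (Z m) + gPair (Y m) (Dv X Z m))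
    -- the connection preserves the spinor inner product:
    (hip : ∀ X (φ' ψ' : M → Spinor) m, Df X (fun m' => spinProd (φ' m') (ψ' m')) m
      = spinProd (Ds X φ' m) (ψ' m) + spinProd (φ' m) (Ds X ψ' m))
    -- the connection is compatible with Clifford multiplication:
    (hcl : ∀ X Y (ψ' : M → Spinor) m, Ds X (fun m' => cliffordMul (Y m') (ψ' m')) m
      = cliffordMul (Dv X Y m) (ψ' m) + cliffordMul (Y m) (Ds X ψ' m))
    -- ψ is a parallel non-null spinor field:
    (ψ : M → Spinor) (hψpar : ∀ X, Ds X ψ = 0)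
    (hψnn : ∀ m, spinProd (ψ m) (ψ m) ≠ 0)
    -- φ spans a parallel line of null spinors, with connection 1-form f:
    (φ : M → Spinor) (f : M → (Fin 7 → ℝ) → ℝ)
    (hφpar : ∀ X m, Ds X φ m = f m (X m) • φ m)
    (hφnull : ∀ m, spinProd (φ m) (φ m) = 0)
    (hφne : ∀ m, φ m ≠ 0)
    -- V is the vector field defined by g̃(V,X) = ⟨X·ψ,φ⟩:
    (V : M → (Fin 7 → ℝ))
    (hV : ∀ m (X : Fin 7 → ℝ), gPair (V m) X = spinProd (cliffordMul X (ψ m)) (φ m)) :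
    (∀ X m, Dv X V m = f m (X m) • V m) ∧ (∀ m, V m ≠ 0) := by

  constructor
  · intro X m
    refine gPair_ext fun Y => ?_
    have e1 := hmet X V (fun _ => Y) m
    have e2 : (fun m' => gPair (V m') ((fun _ => Y) m')) =
        fun m' => spinProd (cliffordMul Y (ψ m')) (φ m') := funext fun m' => hV m' Y
    rw [e2] at e1
    have e3 := hip X (fun m' => cliffordMul Y (ψ m')) φ m
    have e4 := hcl X (fun _ => Y) ψ m
    rw [hψpar X] at e4
    simp only [Pi.zero_apply, cliffordMul_zero, add_zero] at e4
    rw [e3, e4, hφpar X m, spinProd_smul_right, ← hV m (Dv X (fun _ => Y) m), ← hV m Y] at e1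
    rw [gPair_smul_left]
    linarith [e1]
  · intro m hVm
    refine hφne m (pointwise (ψ m) (φ m) (hψnn m) (hφnull m) fun i => ?_)
    have h1 := hV m (Pi.single i 1)
    rw [hVm, gPair_zero_left, cliffordMul_single] at h1
    exact h1.symm
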